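/- Let c ∈ ℂ, r > 0, and let f : ℂ → ℂ be complex-differentiable on an open set containing the closed disk {z : |z - c| ≤ r}. Let x_0, …, x_n be distinct points in the open disk {z : |z - c| < r}, let z_1, …, z_m ∈ ℂ with z_j ∉ {x_0, …, x_n} for all j, set l(s) = ∏_{i=0}^n (s - x_i), q(s) = ∏_{j=1}^m (s - z_j), φ(s) = l(s)/q(s), and define the rational interpolant r(x) = ∑_{i=0}^n f(x_i)·(q(x_i)/q(x))·∏_{j≠i} (x - x_j)/(x_i - x_j). Then for every x in the open disk {z : |z - c| < r} with q(x) ≠ 0, |f(x) - r(x)| ≤ (r/(2π))·(∫_0^{2π} |f(c + re^{iθ})|/|c + re^{iθ} - x| dθ)·|φ(x)|·sup_{θ∈[0,2π]} (1/|φ(c + re^{iθ})|). -/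

import Mathlib

open Finset

private lemma prod_erase_eq_ite {M : Type*} [CommMonoid M] {ι : Type*} [Fintype ι]
    [DecidableEq ι] (i : ι) (F : ι → M) :
    ∏ j ∈ Finset.univ.erase i, F j = ∏ j, (if j = i then 1 else F j) := by
  exact (Finset.prod_congr rfl fun j hj => (if_neg (Finset.mem_erase.1 hj).1).symm).trans
    (Finset.prod_erase Finset.univ (if_pos rfl))

private lemma pf_lemma {N : ℕ} (y : Fin N → ℂ) (hy : Function.Injective y) (P : Polynomial ℂ) :
    ∃ D : Polynomial ℂ, ∀ s : ℂ, (∀ i, s ≠ y i) →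
      Polynomial.eval s P / ∏ i, (s - y i) =
        Polynomial.eval s D +
          ∑ i, Polynomial.eval (y i) P / ((s - y i) * ∏ j ∈ univ.erase i, (y i - y j)) := by
  classical
  set w : Fin N → ℂ := fun i => ∏ j ∈ univ.erase i, (y i - y j) with hw_def
  have hw : ∀ i, w i ≠ 0 := by
    intro i
    refine Finset.prod_ne_zero_iff.2 fun j hj => sub_ne_zero.2 fun h => ?_
    exact (Finset.mem_erase.1 hj).1 (hy h.symm)
  set L : Polynomial ℂ :=
    ∑ i, Polynomial.C (Polynomial.eval (y i) P / w i) *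
      ∏ j ∈ univ.erase i, (Polynomial.X - Polynomial.C (y j)) with hL_def
  have hLnode : ∀ k, Polynomial.eval (y k) L = Polynomial.eval (y k) P := by
    intro k
    rw [hL_def, Polynomial.eval_finset_sum]
    rw [Finset.sum_eq_single k]
    · rw [Polynomial.eval_mul, Polynomial.eval_C, Polynomial.eval_prod]
      simp only [Polynomial.eval_sub, Polynomial.eval_X, Polynomial.eval_C]
      exact div_mul_cancel₀ _ (hw k)
    · intro i _ hik
      rw [Polynomial.eval_mul, Polynomial.eval_prod]
      refine mul_eq_zero.2 (Or.inr ?_)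
      refine Finset.prod_eq_zero (Finset.mem_erase.2 ⟨hik.symm, Finset.mem_univ k⟩) ?_
      simp
    · simp
  have hdvd : (∏ i, (Polynomial.X - Polynomial.C (y i))) ∣ (P - L) := by
    refine Finset.prod_dvd_of_coprime
      ((Polynomial.pairwise_coprime_X_sub_C hy).set_pairwise _) fun i _ => ?_
    rw [Polynomial.dvd_iff_isRoot]
    simp [Polynomial.IsRoot, hLnode i]
  obtain ⟨D, hD⟩ := hdvd
  refine ⟨D, fun s hs => ?_⟩
  have hne : ∀ i : Fin N, s - y i ≠ 0 := fun i => sub_ne_zero.2 (hs i)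
  have hprod : (∏ i, (s - y i)) ≠ 0 := Finset.prod_ne_zero_iff.2 fun i _ => hne i
  have hPs : Polynomial.eval s P =
      Polynomial.eval s L + (∏ i, (s - y i)) * Polynomial.eval s D := by
    have h1 := congrArg (Polynomial.eval s) hD
    rw [Polynomial.eval_sub, Polynomial.eval_mul, Polynomial.eval_prod] at h1
    simp only [Polynomial.eval_sub, Polynomial.eval_X, Polynomial.eval_C] at h1
    linear_combination h1
  rw [hPs, add_div, mul_div_cancel_left₀ _ hprod]
  rw [hL_def, Polynomial.eval_finset_sum, Finset.sum_div, add_comm]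
  congr 1
  refine Finset.sum_congr rfl fun i _ => ?_
  rw [Polynomial.eval_mul, Polynomial.eval_C, Polynomial.eval_prod]
  simp only [Polynomial.eval_sub, Polynomial.eval_X, Polynomial.eval_C]
  rw [← Finset.mul_prod_erase univ (fun j => s - y j) (Finset.mem_univ i)]
  have hB : (∏ j ∈ univ.erase i, (s - y j)) ≠ 0 :=
    Finset.prod_ne_zero_iff.2 fun j _ => hne j
  field_simp
  show _ = Polynomial.eval (y i) P / ((s - y i) * w i)
  ring

open Metric in
set_option maxHeartbeats 1000000 in
/-- Pointwise error bound (2b) for rational interpolation with prescribed poles, deduced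
from Walsh's Hermite integral formula over a circular contour of center `c`, radius `r`. -/
theorem rational_interpolation_error_bound (c : ℂ) (r : ℝ) (hr : 0 < r) (f : ℂ → ℂ)
    (U : Set ℂ) (hUopen : IsOpen U) (hUsub : Metric.closedBall c r ⊆ U)
    (hf : DifferentiableOn ℂ f U)
    (n : ℕ) (x : Fin (n + 1) → ℂ) (hx : Function.Injective x)
    (hxball : ∀ i, x i ∈ Metric.ball c r)
    (m : ℕ) (z : Fin m → ℂ) (hz : ∀ j i, z j ≠ x i)
    (l q φ R : ℂ → ℂ)
    (hl : ∀ s, l s = ∏ i, (s - x i))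
    (hq : ∀ s, q s = ∏ j, (s - z j))
    (hφ : ∀ s, φ s = l s / q s)
    (hR : ∀ X, R X = ∑ i, f (x i) * (q (x i) / q X) *
      ∏ j ∈ univ.erase i, (X - x j) / (x i - x j))
    (X : ℂ) (hX : X ∈ Metric.ball c r) (hqX : q X ≠ 0) :
    ‖f X - R X‖ ≤ (r / (2 * Real.pi)) *
      (∫ θ in (0:ℝ)..(2 * Real.pi),
        ‖f (c + (r : ℂ) * Complex.exp ((θ : ℂ) * Complex.I))‖ /
          ‖c + (r : ℂ) * Complex.exp ((θ : ℂ) * Complex.I) - X‖) *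
      ‖φ X‖ *
      (⨆ θ : Set.Icc (0:ℝ) (2 * Real.pi),
        1 / ‖φ (c + (r : ℂ) * Complex.exp (((θ : ℝ) : ℂ) * Complex.I))‖) := by
  classical
  have h2π : (0:ℝ) < 2 * Real.pi := Real.two_pi_pos
  -- replace the explicit circle parametrization by `circleMap`
  have hcm : ∀ θ : ℝ, circleMap c r θ = c + (r : ℂ) * Complex.exp ((θ : ℂ) * Complex.I) :=
    fun θ => rfl
  -- basic positivity facts about the RHS pieces
  have hInt_nonneg : 0 ≤ ∫ θ in (0:ℝ)..(2 * Real.pi),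
      ‖f (c + (r : ℂ) * Complex.exp ((θ : ℂ) * Complex.I))‖ /
        ‖c + (r : ℂ) * Complex.exp ((θ : ℂ) * Complex.I) - X‖ :=
    intervalIntegral.integral_nonneg h2π.le fun u _ => div_nonneg (norm_nonneg _)
      (norm_nonneg _)
  have hM_nonneg : 0 ≤ ⨆ θ : Set.Icc (0:ℝ) (2 * Real.pi),
      1 / ‖φ (c + (r : ℂ) * Complex.exp (((θ : ℝ) : ℂ) * Complex.I))‖ :=
    Real.iSup_nonneg fun θ => by positivity
  -- the degenerate case `X` is a node
  by_cases hXr : ∃ i, X = x i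
  · obtain ⟨i0, rfl⟩ := hXr
    have hfR : f (x i0) - R (x i0) = 0 := by
      rw [hR]
      rw [Finset.sum_eq_single i0]
      · have h1 : (∏ j ∈ univ.erase i0, (x i0 - x j) / (x i0 - x j)) = 1 :=
          Finset.prod_eq_one fun j hj => div_self (sub_ne_zero.2 fun h =>
            (Finset.mem_erase.1 hj).1 (hx h).symm)
        rw [h1, div_self hqX, mul_one, mul_one, sub_self]
      · intro i _ hii
        have h0 : ((x i0 : ℂ) - x i0) / (x i - x i0) = 0 := by simp
        rw [Finset.prod_eq_zero (Finset.mem_erase.2 ⟨(Ne.symm hii), Finset.mem_univ i0⟩) h0,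
          mul_zero]
      · simp
    rw [hfR, norm_zero]
    have : (0:ℝ) ≤ r / (2 * Real.pi) := by positivity
    exact mul_nonneg (mul_nonneg (mul_nonneg this hInt_nonneg) (norm_nonneg _)) hM_nonneg
  push_neg at hXr
  -- main case: `X` is not a node
  have hlX : l X ≠ 0 := by
    rw [hl]
    exact Finset.prod_ne_zero_iff.2 fun i _ => sub_ne_zero.2 (hXr i)
  -- continuity of the data
  have hqcont : Continuous q :=
    (continuous_finset_prod univ fun j _ => continuous_id.sub continuous_const).congr
      fun s => (hq s).symm
  have hlcont : Continuous l :=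
    (continuous_finset_prod univ fun i _ => continuous_id.sub continuous_const).congr
      fun s => (hl s).symm
  have hfc : ContinuousOn f (Metric.closedBall c r) := hf.continuousOn.mono hUsub
  have hfd : ∀ w ∈ Metric.ball c r, DifferentiableAt ℂ f w := fun w hw =>
    hf.differentiableAt (hUopen.mem_nhds (hUsub (Metric.ball_subset_closedBall hw)))
  have hfsc : ContinuousOn f (Metric.sphere c r) := hfc.mono Metric.sphere_subset_closedBall
  -- points of the sphere are away from nodes and from `X`
  have hsphere_ne : ∀ s ∈ Metric.sphere c r, ∀ w ∈ Metric.ball c r, s ≠ w := by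
    intro s hs w hw h
    rw [Metric.mem_sphere] at hs
    rw [Metric.mem_ball, ← h, hs] at hw
    exact lt_irrefl _ hw
  have hlsphere : ∀ s ∈ Metric.sphere c r, l s ≠ 0 := by
    intro s hs
    rw [hl]
    exact Finset.prod_ne_zero_iff.2 fun i _ =>
      sub_ne_zero.2 (hsphere_ne s hs (x i) (hxball i))
  have hsXne : ∀ s ∈ Metric.sphere c r, s - X ≠ 0 := fun s hs =>
    sub_ne_zero.2 (hsphere_ne s hs X hX)
  -- the nodes, with `X` appended
  set y : Fin (n + 2) → ℂ := Fin.snoc x X with hy_def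
  have hyc : ∀ i : Fin (n + 1), y i.castSucc = x i := fun i => Fin.snoc_castSucc _ _ _
  have hyl : y (Fin.last (n + 1)) = X := Fin.snoc_last _ _
  have hy : Function.Injective y := by
    intro a b hab
    induction a using Fin.lastCases with
    | last =>
      induction b using Fin.lastCases with
      | last => rfl
      | cast j => rw [hyl, hyc] at hab; exact absurd hab (hXr j)
    | cast i =>
      induction b using Fin.lastCases with
      | last => rw [hyc, hyl] at hab; exact absurd hab.symm (hXr i)
      | cast j => rw [hyc, hyc] at hab; rw [hx hab]
  have hyball : ∀ i, y i ∈ Metric.ball c r := by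
    intro i
    induction i using Fin.lastCases with
    | last => rw [hyl]; exact hX
    | cast j => rw [hyc]; exact hxball j
  have hsy : ∀ s ∈ Metric.sphere c r, ∀ i, s ≠ y i := fun s hs i =>
    hsphere_ne s hs (y i) (hyball i)
  -- the numerator polynomial
  set P : Polynomial ℂ := (∏ j, (Polynomial.X - Polynomial.C (z j))) * Polynomial.C (l X)
    with hP_def
  have hPeval : ∀ s, Polynomial.eval s P = q s * l X := by
    intro s
    rw [hP_def, Polynomial.eval_mul, Polynomial.eval_C, Polynomial.eval_prod, hq]
    simp
  obtain ⟨D, hPF⟩ := pf_lemma y hy P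
  have hprodY : ∀ s : ℂ, (∏ i, (s - y i)) = l s * (s - X) := by
    intro s
    rw [Fin.prod_univ_castSucc, hl, hyl]
    congr 1
    exact Finset.prod_congr rfl fun i _ => by rw [hyc]
  -- the weights
  set w : Fin (n + 2) → ℂ := fun i => ∏ j ∈ univ.erase i, (y i - y j) with hw_def
  have hwne : ∀ i, w i ≠ 0 := by
    intro i
    refine Finset.prod_ne_zero_iff.2 fun j hj => sub_ne_zero.2 fun h => ?_
    exact (Finset.mem_erase.1 hj).1 (hy h.symm)
  set B : Fin (n + 2) → ℂ := fun i => q (y i) * l X / (q X * w i) with hB_def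
  have hwlast : w (Fin.last (n + 1)) = l X := by
    rw [hw_def]
    simp only
    rw [prod_erase_eq_ite, Fin.prod_univ_castSucc, if_pos rfl, mul_one, hl]
    refine Finset.prod_congr rfl fun j _ => ?_
    rw [if_neg (Fin.castSucc_lt_last j).ne, hyl, hyc]
  have hwcast : ∀ i : Fin (n + 1),
      w i.castSucc = (x i - X) * ∏ j ∈ univ.erase i, (x i - x j) := by
    intro i
    rw [hw_def]
    simp only
    rw [prod_erase_eq_ite, Fin.prod_univ_castSucc,
      if_neg (Fin.castSucc_lt_last i).ne', hyl, hyc, mul_comm]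
    congr 1
    rw [prod_erase_eq_ite]
    refine Finset.prod_congr rfl fun j _ => ?_
    simp only [Fin.castSucc_inj, hyc]
  -- the residue sum gives the interpolation error
  have hBsum : ∑ i, B i * f (y i) = f X - R X := by
    rw [Fin.sum_univ_castSucc]
    have hlast : B (Fin.last (n + 1)) * f (y (Fin.last (n + 1))) = f X := by
      rw [hB_def]
      simp only
      rw [hwlast, hyl, div_self (mul_ne_zero hqX hlX), one_mul]
    have hcast : ∀ i : Fin (n + 1), B i.castSucc * f (y i.castSucc) =
        -(f (x i) * (q (x i) / q X) * ∏ j ∈ univ.erase i, (X - x j) / (x i - x j)) := by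
      intro i
      rw [hB_def]
      simp only
      rw [hwcast, hyc]
      have h1 : l X = (X - x i) * ∏ j ∈ univ.erase i, (X - x j) := by
        rw [hl]
        exact (Finset.mul_prod_erase univ _ (Finset.mem_univ i)).symm
      rw [h1, Finset.prod_div_distrib]
      have hd1 : (∏ j ∈ univ.erase i, (x i - x j)) ≠ 0 :=
        Finset.prod_ne_zero_iff.2 fun j hj => sub_ne_zero.2 fun h =>
          (Finset.mem_erase.1 hj).1 (hx h).symm
      have hd2 : x i - X ≠ 0 := sub_ne_zero.2 fun h => hXr i h.symm
      field_simp
      ring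
    have hsum' : ∑ i : Fin (n + 1), B i.castSucc * f (y i.castSucc) =
        ∑ i, -(f (x i) * (q (x i) / q X) * ∏ j ∈ univ.erase i, (X - x j) / (x i - x j)) :=
      Finset.sum_congr rfl fun i _ => hcast i
    rw [hlast, hsum', Finset.sum_neg_distrib, ← hR X]
    ring
  -- the integrand of Walsh's formula
  set g : ℂ → ℂ := fun s => f s * (q s * l X) / (q X * (l s * (s - X))) with hg_def
  set h : ℂ → ℂ := fun s => f s * Polynomial.eval s D / q X +
    ∑ i, B i * ((s - y i)⁻¹ * f s) with hh_def
  have hgh : Set.EqOn g h (Metric.sphere c r) := by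
    intro s hs
    have hls := hlsphere s hs
    have hsX := hsXne s hs
    have hsubne : ∀ i, s - y i ≠ 0 := fun i => sub_ne_zero.2 (hsy s hs i)
    have hPFs := hPF s (hsy s hs)
    rw [hprodY s] at hPFs
    have e1 : g s = f s / q X * (Polynomial.eval s P / (l s * (s - X))) := by
      rw [hg_def]
      simp only
      rw [hPeval]
      field_simp
    show g s = h s
    rw [e1, hPFs, mul_add, hh_def]
    simp only
    congr 1
    · field_simp
    · rw [Finset.mul_sum]
      refine Finset.sum_congr rfl fun i _ => ?_
      rw [hPeval, hB_def]
      simp only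
      field_simp
      ring
  -- integrability of the pieces
  have hderivc : Continuous (fun θ : ℝ => deriv (circleMap c r) θ) :=
    ((continuous_circleMap 0 r).mul continuous_const).congr
      fun θ => (deriv_circleMap c r θ).symm
  have hcomp : ∀ {F : ℂ → ℂ}, ContinuousOn F (Metric.sphere c r) →
      ∀ t : Set ℝ, ContinuousOn (fun θ : ℝ => F (circleMap c r θ)) t := fun hF t =>
    hF.comp (continuous_circleMap c r).continuousOn
      (fun θ _ => circleMap_mem_sphere c hr.le θ)
  have hAc : ContinuousOn (fun s => f s * Polynomial.eval s D / q X) (Metric.sphere c r) :=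
    (hfsc.mul (Polynomial.continuous D).continuousOn).div_const _
  have hTc : ∀ i : Fin (n + 2),
      ContinuousOn (fun s => B i * ((s - y i)⁻¹ * f s)) (Metric.sphere c r) := fun i =>
    continuousOn_const.mul
      ((((continuous_id.sub continuous_const).continuousOn).inv₀ fun s hs =>
        sub_ne_zero.2 (hsy s hs i)).mul hfsc)
  -- the two Cauchy facts
  have hC1 : (∮ s in C(c, r), f s * Polynomial.eval s D / q X) = 0 :=
    Complex.circleIntegral_eq_zero_of_differentiable_on_off_countable hr.le Set.countable_empty
      ((hfc.mul (Polynomial.continuous D).continuousOn).div_const _)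
      (fun s hs => ((hfd s hs.1).mul ((Polynomial.differentiable D) s)).div_const _)
  have hC2 : ∀ i, (∮ s in C(c, r), (s - y i)⁻¹ * f s)
      = (2 * Real.pi * Complex.I) * f (y i) := by
    intro i
    have := Complex.circleIntegral_sub_inv_smul_of_differentiable_on_off_countable
      (s := (∅ : Set ℂ)) Set.countable_empty (hyball i) hfc (fun s hs => hfd s hs.1)
    simpa [smul_eq_mul] using this
  -- linearity of the circle integral
  have hadd : (∮ s in C(c, r), h s) = (∮ s in C(c, r), f s * Polynomial.eval s D / q X) +
      ∑ i, ∮ s in C(c, r), B i * ((s - y i)⁻¹ * f s) := by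
    have hA : IntervalIntegrable
        (fun θ => deriv (circleMap c r) θ •
          (f (circleMap c r θ) * Polynomial.eval (circleMap c r θ) D / q X))
        MeasureTheory.volume 0 (2 * Real.pi) :=
      (hderivc.continuousOn.smul (hcomp hAc _)).intervalIntegrable
    have hT : ∀ i : Fin (n + 2), IntervalIntegrable
        (fun θ => deriv (circleMap c r) θ •
          (B i * ((circleMap c r θ - y i)⁻¹ * f (circleMap c r θ))))
        MeasureTheory.volume 0 (2 * Real.pi) := fun i =>
      (hderivc.continuousOn.smul (hcomp (hTc i) _)).intervalIntegrable
    have hS : IntervalIntegrable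
        (fun θ => ∑ i : Fin (n + 2), deriv (circleMap c r) θ •
          (B i * ((circleMap c r θ - y i)⁻¹ * f (circleMap c r θ))))
        MeasureTheory.volume 0 (2 * Real.pi) := by
      have := IntervalIntegrable.sum univ (fun i (_ : i ∈ univ) => hT i)
      rwa [show (∑ i : Fin (n + 2), fun θ => deriv (circleMap c r) θ •
          (B i * ((circleMap c r θ - y i)⁻¹ * f (circleMap c r θ)))) =
          (fun θ => ∑ i : Fin (n + 2), deriv (circleMap c r) θ •
          (B i * ((circleMap c r θ - y i)⁻¹ * f (circleMap c r θ)))) from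
        funext fun θ => by simp [Finset.sum_apply]] at this
    calc (∮ s in C(c, r), h s)
        = ∫ θ in (0:ℝ)..(2 * Real.pi), (deriv (circleMap c r) θ •
            (f (circleMap c r θ) * Polynomial.eval (circleMap c r θ) D / q X) +
          ∑ i : Fin (n + 2), deriv (circleMap c r) θ •
            (B i * ((circleMap c r θ - y i)⁻¹ * f (circleMap c r θ)))) := by
          refine intervalIntegral.integral_congr fun θ _ => ?_
          simp only [hh_def, smul_add, Finset.smul_sum]
      _ = (∫ θ in (0:ℝ)..(2 * Real.pi), deriv (circleMap c r) θ •
            (f (circleMap c r θ) * Polynomial.eval (circleMap c r θ) D / q X)) +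
          ∫ θ in (0:ℝ)..(2 * Real.pi), ∑ i : Fin (n + 2), deriv (circleMap c r) θ •
            (B i * ((circleMap c r θ - y i)⁻¹ * f (circleMap c r θ))) :=
          intervalIntegral.integral_add hA hS
      _ = (∮ s in C(c, r), f s * Polynomial.eval s D / q X) +
          ∑ i, ∮ s in C(c, r), B i * ((s - y i)⁻¹ * f s) := by
          rw [intervalIntegral.integral_finset_sum (fun i _ => hT i)]
          rfl
  -- Walsh's formula
  have hkey : f X - R X = (2 * Real.pi * Complex.I)⁻¹ * ∮ s in C(c, r), g s := by
    have h2πI : (2 * Real.pi * Complex.I : ℂ) ≠ 0 := by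
      simp [Real.pi_ne_zero, Complex.I_ne_zero]
    rw [circleIntegral.integral_congr hr.le hgh, hadd, hC1, zero_add]
    have hsum2 : ∑ i, (∮ s in C(c, r), B i * ((s - y i)⁻¹ * f s)) =
        ∑ i, B i * ((2 * Real.pi * Complex.I) * f (y i)) :=
      Finset.sum_congr rfl fun i _ => by
        rw [circleIntegral.integral_const_mul, hC2 i]
    have hsum3 : ∑ i, B i * ((2 * Real.pi * Complex.I) * f (y i)) =
        (2 * Real.pi * Complex.I) * ∑ i, B i * f (y i) := by
      rw [Finset.mul_sum]
      exact Finset.sum_congr rfl fun i _ => by ring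
    rw [hsum2, hsum3, hBsum, inv_mul_cancel_left₀ h2πI]
  -- continuity of g on the sphere
  have hgc : ContinuousOn g (Metric.sphere c r) := by
    rw [hg_def]
    refine ContinuousOn.div ?_ ?_ ?_
    · exact hfsc.mul ((hqcont.continuousOn).mul continuousOn_const)
    · exact continuousOn_const.mul ((hlcont.continuousOn).mul
        ((continuous_id.sub continuous_const).continuousOn))
    · intro s hs
      exact mul_ne_zero hqX (mul_ne_zero (hlsphere s hs) (hsXne s hs))
  have hcm_mem : ∀ θ : ℝ, circleMap c r θ ∈ Metric.sphere c r :=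
    circleMap_mem_sphere c hr.le
  -- rewriting the supremum
  have hsup_eq : (⨆ θ : Set.Icc (0:ℝ) (2 * Real.pi),
      1 / ‖φ (c + (r : ℂ) * Complex.exp (((θ : ℝ) : ℂ) * Complex.I))‖) =
      ⨆ θ : Set.Icc (0:ℝ) (2 * Real.pi),
        ‖q (circleMap c r (θ : ℝ))‖ / ‖l (circleMap c r (θ : ℝ))‖ := by
    congr 1
    funext θ
    rw [← hcm ((θ : ℝ)), hφ]
    rcases eq_or_ne (q (circleMap c r (θ : ℝ))) 0 with h0 | h0
    · simp [h0]
    · rw [norm_div, one_div, inv_div]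
  rw [hsup_eq]
  set M : ℝ := ⨆ θ : Set.Icc (0:ℝ) (2 * Real.pi),
      ‖q (circleMap c r (θ : ℝ))‖ / ‖l (circleMap c r (θ : ℝ))‖
    with hM_def
  have hGcont : Continuous (fun θ : Set.Icc (0:ℝ) (2 * Real.pi) =>
      ‖q (circleMap c r (θ : ℝ))‖ / ‖l (circleMap c r (θ : ℝ))‖) := by
    have hcmc : Continuous (fun θ : Set.Icc (0:ℝ) (2 * Real.pi) => circleMap c r (θ : ℝ)) :=
      (continuous_circleMap c r).comp continuous_subtype_val
    refine ((continuous_norm.comp (hqcont.comp hcmc)).div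
      (continuous_norm.comp (hlcont.comp hcmc)) ?_)
    intro θ
    exact norm_ne_zero_iff.mpr (hlsphere _ (hcm_mem _))
  have hbdd : BddAbove (Set.range fun θ : Set.Icc (0:ℝ) (2 * Real.pi) =>
      ‖q (circleMap c r (θ : ℝ))‖ / ‖l (circleMap c r (θ : ℝ))‖) :=
    (isCompact_range hGcont).bddAbove
  have hMle : ∀ θ : ℝ, θ ∈ Set.Icc (0:ℝ) (2 * Real.pi) →
      ‖q (circleMap c r θ)‖ / ‖l (circleMap c r θ)‖ ≤ M :=
    fun θ hθ => le_ciSup hbdd (⟨θ, hθ⟩ : Set.Icc (0:ℝ) (2 * Real.pi))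
  have habsφX : ‖φ X‖ = ‖l X‖ / ‖q X‖ := by
    rw [hφ, norm_div]
  -- pointwise bound on the circle
  have hpt : ∀ θ ∈ Set.Icc (0:ℝ) (2 * Real.pi),
      r * ‖g (circleMap c r θ)‖ ≤
      (r * (‖φ X‖ * M)) *
        (‖f (circleMap c r θ)‖ / ‖circleMap c r θ - X‖) := by
    intro θ hθ
    have hs := hcm_mem θ
    have hls := hlsphere _ hs
    have hsX := hsXne _ hs
    have h1 : ‖q X‖ ≠ 0 := norm_ne_zero_iff.mpr hqX
    have h2 : ‖l (circleMap c r θ)‖ ≠ 0 := norm_ne_zero_iff.mpr hls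
    have h3 : ‖circleMap c r θ - X‖ ≠ 0 := norm_ne_zero_iff.mpr hsX
    have habsg : ‖g (circleMap c r θ)‖ =
        (‖f (circleMap c r θ)‖ / ‖circleMap c r θ - X‖) *
        (‖l X‖ / ‖q X‖) *
        (‖q (circleMap c r θ)‖ / ‖l (circleMap c r θ)‖) := by
      rw [hg_def]
      simp only
      rw [norm_div, norm_mul, norm_mul, norm_mul, norm_mul]
      field_simp
    rw [habsg, habsφX]
    have hpos : 0 ≤ r * (‖l X‖ / ‖q X‖) *
        (‖f (circleMap c r θ)‖ / ‖circleMap c r θ - X‖) := by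
      positivity
    calc r * ((‖f (circleMap c r θ)‖ / ‖circleMap c r θ - X‖) *
          (‖l X‖ / ‖q X‖) *
          (‖q (circleMap c r θ)‖ / ‖l (circleMap c r θ)‖))
        = (r * (‖l X‖ / ‖q X‖) *
            (‖f (circleMap c r θ)‖ / ‖circleMap c r θ - X‖)) *
          (‖q (circleMap c r θ)‖ / ‖l (circleMap c r θ)‖) := by ring
      _ ≤ (r * (‖l X‖ / ‖q X‖) *
            (‖f (circleMap c r θ)‖ / ‖circleMap c r θ - X‖)) * M :=
          mul_le_mul_of_nonneg_left (hMle θ hθ) hpos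
      _ = (r * (‖l X‖ / ‖q X‖ * M)) *
          (‖f (circleMap c r θ)‖ / ‖circleMap c r θ - X‖) := by ring
  -- integrability of both sides of the pointwise bound
  have hif1 : IntervalIntegrable (fun θ => r * ‖g (circleMap c r θ)‖)
      MeasureTheory.volume 0 (2 * Real.pi) := by
    refine ContinuousOn.intervalIntegrable (continuousOn_const.mul ?_)
    exact continuous_norm.comp_continuousOn (hcomp hgc _)
  have hif2 : IntervalIntegrable (fun θ => (r * (‖φ X‖ * M)) *
      (‖f (circleMap c r θ)‖ / ‖circleMap c r θ - X‖))
      MeasureTheory.volume 0 (2 * Real.pi) := by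
    refine ContinuousOn.intervalIntegrable (continuousOn_const.mul (ContinuousOn.div ?_ ?_ ?_))
    · exact continuous_norm.comp_continuousOn (hcomp hfsc _)
    · exact (continuous_norm.comp ((continuous_circleMap c r).sub
        continuous_const)).continuousOn
    · intro θ _
      exact norm_ne_zero_iff.mpr (hsXne _ (hcm_mem θ))
  -- the integral bound
  have hbound1 : ‖f X - R X‖ ≤
      (2 * Real.pi)⁻¹ * ∫ θ in (0:ℝ)..(2 * Real.pi), r * ‖g (circleMap c r θ)‖ := by
    rw [hkey, norm_mul, norm_inv]
    have habs2πI : ‖2 * (Real.pi : ℂ) * Complex.I‖ = 2 * Real.pi := by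
      rw [norm_mul, norm_mul, Complex.norm_I, mul_one, Complex.norm_two, Complex.norm_real,
        Real.norm_of_nonneg Real.pi_pos.le]
    rw [habs2πI]
    refine mul_le_mul_of_nonneg_left ?_ (by positivity)
    have h1 : ‖∮ s in C(c, r), g s‖ ≤ ∫ θ in (0:ℝ)..(2 * Real.pi),
        ‖deriv (circleMap c r) θ • g (circleMap c r θ)‖ :=
      intervalIntegral.norm_integral_le_integral_norm h2π.le
    have h2 : (∫ θ in (0:ℝ)..(2 * Real.pi), ‖deriv (circleMap c r) θ • g (circleMap c r θ)‖) =
        ∫ θ in (0:ℝ)..(2 * Real.pi), r * ‖g (circleMap c r θ)‖ := by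
      refine intervalIntegral.integral_congr fun θ _ => ?_
      rw [norm_smul, deriv_circleMap, norm_mul,
        Complex.norm_I, mul_one, norm_circleMap_zero, abs_of_pos hr]
    rw [← h2]
    exact h1
  have hbound2 : (∫ θ in (0:ℝ)..(2 * Real.pi), r * ‖g (circleMap c r θ)‖) ≤
      (r * (‖φ X‖ * M)) * ∫ θ in (0:ℝ)..(2 * Real.pi),
        ‖f (circleMap c r θ)‖ / ‖circleMap c r θ - X‖ := by
    rw [← intervalIntegral.integral_const_mul]
    exact intervalIntegral.integral_mono_on h2π.le hif1 hif2 hpt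
  -- assembling everything
  have hIeq : (∫ θ in (0:ℝ)..(2 * Real.pi),
      ‖f (c + (r : ℂ) * Complex.exp ((θ : ℂ) * Complex.I))‖ /
        ‖c + (r : ℂ) * Complex.exp ((θ : ℂ) * Complex.I) - X‖) =
      ∫ θ in (0:ℝ)..(2 * Real.pi),
        ‖f (circleMap c r θ)‖ / ‖circleMap c r θ - X‖ :=
    intervalIntegral.integral_congr fun θ _ => by rw [hcm θ]
  rw [hIeq]
  calc ‖f X - R X‖
      ≤ (2 * Real.pi)⁻¹ * ∫ θ in (0:ℝ)..(2 * Real.pi),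
          r * ‖g (circleMap c r θ)‖ := hbound1
    _ ≤ (2 * Real.pi)⁻¹ * ((r * (‖φ X‖ * M)) * ∫ θ in (0:ℝ)..(2 * Real.pi),
          ‖f (circleMap c r θ)‖ / ‖circleMap c r θ - X‖) :=
        mul_le_mul_of_nonneg_left hbound2 (by positivity)
    _ = (r / (2 * Real.pi)) * (∫ θ in (0:ℝ)..(2 * Real.pi),
          ‖f (circleMap c r θ)‖ / ‖circleMap c r θ - X‖) *
          ‖φ X‖ * M := by ring
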